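/- Let W > 0, let N_p and K be positive integers, and set M = N_p + K. Let S : {0,…,N_p−1} → ℂ, and define the analog pilot signal S_A(t) = Σ_{n=0}^{M−1} S[n mod N_p] · sinc(Wt − n), where sinc(u) = sin(πu)/(πu) for u ≠ 0 and sinc(0) = 1. Suppose the channel has P paths with complex gains h_i' ∈ ℂ, delays τ_i = δ_i/W with δ_i ∈ ℤ and 0 ≤ δ_i ≤ K, and Doppler shifts ν_i = (W/N_p)·ω_i with ω_i ∈ ℤ, for i = 1,…,P, and the noiseless received signal is R_A(t) = Σ_{i=1}^P h_i' e^{2πi ν_i t} S_A(t − τ_i). Then the samples R[n] := R_A((K+n)/W), for n = 0, 1, …, N_p−1, satisfy R[n] = Σ_{i=1}^P α_i e^{2πi ω_i n / N_p} S[(K + n − δ_i) mod N_p], where α_i = h_i' e^{2πi ν_i K / W}. -/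

import Mathlib

open Finset

/-- The normalized sinc function: `sinc u = sin (π u) / (π u)` for `u ≠ 0`, `sinc 0 = 1`. -/
noncomputable def sinc (u : ℝ) : ℝ :=
  if u = 0 then 1 else Real.sin (Real.pi * u) / (Real.pi * u)

lemma sinc_intCast (m : ℤ) : sinc (m : ℝ) = if m = 0 then 1 else 0 := by
  unfold sinc
  rcases eq_or_ne m 0 with h | h
  · simp [h]
  · rw [if_neg (by exact_mod_cast h), if_neg (by exact_mod_cast h),
      mul_comm, Real.sin_int_mul_pi, zero_div]

/-- Discrete delay-Doppler channel model: sampling the sinc-interpolated pilot after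
a `P`-path delay-Doppler channel yields a cyclic shift-and-modulate model. -/
theorem discrete_delay_doppler_channel_model
    (W : ℝ) (hW : 0 < W)
    (Np K : ℕ) (hNp : 0 < Np) (hK : 0 < K)
    (S : ℕ → ℂ)
    (P : ℕ) (h' : Fin P → ℂ)
    (δ : Fin P → ℕ) (hδ : ∀ i, δ i ≤ K)
    (ω : Fin P → ℤ)
    (τ : Fin P → ℝ) (hτ : ∀ i, τ i = (δ i : ℝ) / W)
    (ν : Fin P → ℝ) (hν : ∀ i, ν i = (W / (Np : ℝ)) * (ω i : ℝ))
    (SA RA : ℝ → ℂ)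
    (hSA : ∀ t : ℝ, SA t = ∑ n ∈ Finset.range (Np + K),
      S (n % Np) * ((sinc (W * t - (n : ℝ)) : ℝ) : ℂ))
    (hRA : ∀ t : ℝ, RA t = ∑ i : Fin P,
      h' i * Complex.exp (2 * Real.pi * Complex.I * (ν i : ℂ) * (t : ℂ)) * SA (t - τ i)) :
    ∀ n : ℕ, n < Np →
      RA (((K : ℝ) + (n : ℝ)) / W) =
        ∑ i : Fin P,
          (h' i * Complex.exp (2 * Real.pi * Complex.I * (ν i : ℂ) * (K : ℂ) / (W : ℂ))) *
            Complex.exp (2 * Real.pi * Complex.I * (ω i : ℂ) * (n : ℂ) / (Np : ℂ)) *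
            S ((K + n - δ i) % Np) := by
  intro n hn
  rw [hRA]
  refine Finset.sum_congr rfl fun i _ => ?_
  have hW0 : W ≠ 0 := ne_of_gt hW
  have hNp0 : (Np : ℝ) ≠ 0 := Nat.cast_ne_zero.mpr hNp.ne'
  set d : ℕ := K + n - δ i with hd
  have hδle : δ i ≤ K + n := le_trans (hδ i) (Nat.le_add_right _ _)
  have hdcast : (d : ℝ) = (K : ℝ) + n - δ i := by
    rw [hd, Nat.cast_sub hδle]; push_cast; ring
  have hdlt : d < Np + K := by omega
  -- the sample point
  have htarg : ((K : ℝ) + (n : ℝ)) / W - τ i = (d : ℝ) / W := by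
    rw [hτ, hdcast]; ring
  -- SA evaluates to a single term
  have hSAval : SA (((K : ℝ) + (n : ℝ)) / W - τ i) = S (d % Np) := by
    rw [htarg, hSA]
    rw [Finset.sum_eq_single_of_mem d (Finset.mem_range.mpr hdlt)]
    · have : W * ((d : ℝ) / W) - (d : ℝ) = ((0 : ℤ) : ℝ) := by
        field_simp; simp
      rw [this, sinc_intCast]; simp
    · intro b _ hb
      have : W * ((d : ℝ) / W) - (b : ℝ) = (((d : ℤ) - b : ℤ) : ℝ) := by
        push_cast; field_simp
      have hne : (d : ℤ) - (b : ℤ) ≠ 0 := by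
        intro h
        exact hb (by omega)
      rw [this, sinc_intCast, if_neg hne]
      norm_num
  rw [hSAval]
  -- the exponential splits
  have hexp : Complex.exp (2 * Real.pi * Complex.I * (ν i : ℂ) * ((((K : ℝ) + (n : ℝ)) / W : ℝ) : ℂ)) =
      Complex.exp (2 * Real.pi * Complex.I * (ν i : ℂ) * (K : ℂ) / (W : ℂ)) *
        Complex.exp (2 * Real.pi * Complex.I * (ω i : ℂ) * (n : ℂ) / (Np : ℂ)) := by
    rw [← Complex.exp_add]
    congr 1
    have hνi : ((ν i : ℝ) : ℂ) = ((W : ℂ) / (Np : ℂ)) * (ω i : ℂ) := by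
      rw [hν]; push_cast; ring
    have hWc : (W : ℂ) ≠ 0 := by exact_mod_cast hW0
    have hNpc : ((Np : ℕ) : ℂ) ≠ 0 := Nat.cast_ne_zero.mpr hNp.ne'
    rw [hνi]
    push_cast
    field_simp
  rw [hexp]
  ring
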